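/- For every integer m ≥ 1 and |q|<1: ∑_{j=1}^{∞} (-1)^{j-1} ((q^j;q)_m − 1) = (1/2)((q;q)_m/(-q;q)_m − 1). (A finite analogue of the sum-of-tails identity.) -/

import Mathlib

open Finset

/-- q-Pochhammer symbol (a;q)_n = ∏_{k=0}^{n-1} (1 - a q^k). -/
noncomputable def qP (a q : ℂ) (n : ℕ) : ℂ := ∏ k ∈ Finset.range n, (1 - a * q ^ k)

/-- Gaussian (q-)binomial coefficient [N choose n]_q. -/
noncomputable def qBinom (q : ℂ) (N n : ℕ) : ℂ := qP q q N / (qP q q n * qP q q (N - n))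

namespace Aux13

lemma qP_zero (a q : ℂ) : qP a q 0 = 1 := by simp [qP]

lemma qP_succ (a q : ℂ) (m : ℕ) : qP a q (m+1) = qP a q m * (1 - a * q ^ m) :=
  Finset.prod_range_succ _ _

lemma qP_shift (q : ℂ) (j m : ℕ) :
    qP (q^(j+1)) q (m+1) = (1 - q^(j+1)) * qP (q^(j+2)) q m := by
  unfold qP
  rw [Finset.prod_range_succ', mul_comm]
  congr 1
  · simp
  · exact Finset.prod_congr rfl fun k _ => by ring

lemma norm_qP_le (q a : ℂ) (hq : ‖q‖ ≤ 1) (ha : ‖a‖ ≤ 1) (m : ℕ) :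
    ‖qP a q m‖ ≤ 2 ^ m := by
  unfold qP
  calc ‖∏ k ∈ Finset.range m, (1 - a * q ^ k)‖
      ≤ ∏ k ∈ Finset.range m, ‖(1 - a * q ^ k)‖ := norm_prod_le _ _
    _ ≤ ∏ k ∈ Finset.range m, (2:ℝ) := by
        apply Finset.prod_le_prod (fun k _ => norm_nonneg _)
        intro k _
        calc ‖(1 - a * q ^ k)‖ ≤ ‖(1:ℂ)‖ + ‖a * q ^ k‖ := norm_sub_le _ _
          _ = 1 + ‖a‖ * ‖q‖ ^ k := by rw [norm_one, norm_mul, norm_pow]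
          _ ≤ 1 + 1 * 1 := by
              gcongr
              exact pow_le_one₀ (norm_nonneg _) hq
          _ = 2 := by norm_num
    _ = 2 ^ m := by rw [Finset.prod_const, Finset.card_range]

lemma norm_qP_sub_one (q a : ℂ) (hq : ‖q‖ ≤ 1) (ha : ‖a‖ ≤ 1) (m : ℕ) :
    ‖qP a q m - 1‖ ≤ 2 ^ m * ‖a‖ := by
  induction m with
  | zero => simp [qP_zero]
  | succ m ih =>
    have h1 : qP a q (m+1) - 1 = (qP a q m - 1) - a * q ^ m * qP a q m := by
      rw [qP_succ]; ring
    rw [h1]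
    have hb : ‖a * q ^ m * qP a q m‖ ≤ ‖a‖ * 1 * (2 ^ m) := by
      rw [norm_mul, norm_mul, norm_pow]
      have h1 : ‖q‖ ^ m ≤ 1 := pow_le_one₀ (norm_nonneg _) hq
      have h2 : ‖qP a q m‖ ≤ 2 ^ m := norm_qP_le q a hq ha m
      gcongr
    calc ‖(qP a q m - 1) - a * q ^ m * qP a q m‖
        ≤ ‖qP a q m - 1‖ + ‖a * q ^ m * qP a q m‖ := norm_sub_le _ _
      _ ≤ 2 ^ m * ‖a‖ + ‖a‖ * 1 * (2 ^ m) := add_le_add ih hb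
      _ = 2 ^ (m+1) * ‖a‖ := by ring

lemma norm_pow_succ_le (q : ℂ) (hq : ‖q‖ < 1) (j : ℕ) : ‖q ^ (j+1)‖ ≤ 1 := by
  rw [norm_pow]
  exact le_of_lt (pow_lt_one₀ (norm_nonneg _) hq (Nat.succ_ne_zero j))

lemma sumS (q : ℂ) (hq : ‖q‖ < 1) (m : ℕ) :
    Summable (fun j : ℕ => (-1:ℂ)^j * (qP (q^(j+1)) q m - 1)) := by
  apply Summable.of_norm_bounded (g := fun j : ℕ => (2 ^ m * ‖q‖) * ‖q‖ ^ j)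
    (((summable_geometric_of_lt_one (norm_nonneg q) hq)).mul_left _)
  intro j
  rw [norm_mul, norm_pow, norm_neg, norm_one, one_pow, one_mul]
  calc ‖qP (q^(j+1)) q m - 1‖ ≤ 2 ^ m * ‖q ^ (j+1)‖ :=
        norm_qP_sub_one q _ hq.le (norm_pow_succ_le q hq j) m
    _ = 2 ^ m * ‖q‖ * ‖q‖ ^ j := by rw [norm_pow, pow_succ]; ring

lemma sumU (q : ℂ) (hq : ‖q‖ < 1) (m : ℕ) :
    Summable (fun j : ℕ => (-1:ℂ)^j * q^j * qP (q^(j+1)) q m) := by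
  apply Summable.of_norm_bounded (g := fun j : ℕ => (2 ^ m : ℝ) * ‖q‖ ^ j)
    (((summable_geometric_of_lt_one (norm_nonneg q) hq)).mul_left _)
  intro j
  rw [norm_mul, norm_mul, norm_pow, norm_pow, norm_neg, norm_one, one_pow, one_mul]
  calc ‖q‖ ^ j * ‖qP (q^(j+1)) q m‖ ≤ ‖q‖ ^ j * 2 ^ m := by
        gcongr
        exact norm_qP_le q _ hq.le (norm_pow_succ_le q hq j) m
    _ = 2 ^ m * ‖q‖ ^ j := by ring

noncomputable def S (q : ℂ) (m : ℕ) : ℂ := ∑' j : ℕ, (-1:ℂ)^j * (qP (q^(j+1)) q m - 1)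

noncomputable def U (q : ℂ) (m : ℕ) : ℂ := ∑' j : ℕ, (-1:ℂ)^j * q^j * qP (q^(j+1)) q m

lemma relS (q : ℂ) (hq : ‖q‖ < 1) (m : ℕ) :
    S q (m+1) = S q m - q^(m+1) * U q m := by
  have h1 := sumS q hq m
  have h2 := sumU q hq m
  unfold S U
  rw [← tsum_mul_left, ← Summable.tsum_sub h1 (h2.mul_left _)]
  apply tsum_congr; intro j
  rw [qP_succ]
  ring

lemma relU (q : ℂ) (hq : ‖q‖ < 1) (m : ℕ) :
    (1 + q^(m+1)) * U q m = 2 * S q m + 1 := by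
  set f : ℕ → ℂ := fun j => (-1:ℂ)^j * (qP (q^(j+1)) q m - 1) with hf
  set g : ℕ → ℂ := fun j => (-1:ℂ)^j * q^j * qP (q^(j+1)) q m with hg
  have hfs : Summable f := sumS q hq m
  have hgs : Summable g := sumU q hq m
  have hfs' : Summable (fun j => f (j+1)) := (summable_nat_add_iff 1).2 hfs
  have hgs' : Summable (fun j => g (j+1)) := (summable_nat_add_iff 1).2 hgs
  have key : ∀ j : ℕ, q^(m+1) * g j = f j + (f (j+1) - g (j+1)) := by
    intro j
    have e1 : qP (q^(j+1)) q m * (1 - q^(j+1) * q^m) = (1 - q^(j+1)) * qP (q^(j+1+1)) q m := by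
      rw [← qP_succ, qP_shift]
    simp only [hf, hg]
    linear_combination (-((-1:ℂ))^j) * e1
  have hSdef : S q m = ∑' j, f j := rfl
  have hUdef : U q m = ∑' j, g j := rfl
  have tf : ∑' j, f (j+1) = (∑' j, f j) - f 0 := by
    have h := Summable.tsum_eq_zero_add hfs
    linear_combination -h
  have tg : ∑' j, g (j+1) = (∑' j, g j) - g 0 := by
    have h := Summable.tsum_eq_zero_add hgs
    linear_combination -h
  have hmain : q^(m+1) * U q m = (∑' j, f j) + (((∑' j, f j) - f 0) - ((∑' j, g j) - g 0)) := by
    rw [hUdef, ← tsum_mul_left, tsum_congr key, Summable.tsum_add hfs (hfs'.sub hgs'),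
      Summable.tsum_sub hfs' hgs', tf, tg]
  have hf0 : f 0 = qP (q^1) q m - 1 := by simp [hf]
  have hg0 : g 0 = qP (q^1) q m := by simp [hg]
  rw [hf0, hg0, ← hSdef, ← hUdef] at hmain
  linear_combination hmain

lemma qPneg_ne (q : ℂ) (hq : ‖q‖ < 1) (m : ℕ) : qP (-q) q m ≠ 0 := by
  unfold qP
  rw [Finset.prod_ne_zero_iff]
  intro k _ h
  have h1 : -q * q ^ k = 1 := by linear_combination -h
  have h2 : ‖-q * q ^ k‖ < 1 := by
    rw [norm_mul, norm_neg, norm_pow]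
    calc ‖q‖ * ‖q‖ ^ k = ‖q‖ ^ (k+1) := by ring
      _ < 1 := pow_lt_one₀ (norm_nonneg _) hq (Nat.succ_ne_zero k)
  rw [h1] at h2
  simp at h2

lemma main (q : ℂ) (hq : ‖q‖ < 1) (m : ℕ) :
    2 * S q m * qP (-q) q m = qP q q m - qP (-q) q m := by
  induction m with
  | zero =>
    have : S q 0 = 0 := by
      unfold S
      simp [qP_zero]
    rw [this]; simp [qP_zero]
  | succ m ih =>
    have h1 := relS q hq m
    have h2 := relU q hq m
    have e1 : qP q q (m+1) = qP q q m * (1 - q^(m+1)) := by rw [qP_succ]; ring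
    have e2 : qP (-q) q (m+1) = qP (-q) q m * (1 + q^(m+1)) := by rw [qP_succ]; ring
    rw [h1, e1, e2]
    linear_combination (1 - q^(m+1)) * ih - (2*q^(m+1)*qP (-q) q m) * h2

end Aux13

/-- A finite analogue of the sum-of-tails identity. -/
theorem stmt_13 (m : ℕ) (hm : 1 ≤ m) (q : ℂ) (hq : ‖q‖ < 1) :
    ∑' j : ℕ, (-1 : ℂ) ^ j * (qP (q ^ (j + 1)) q m - 1) =
      (1 / 2) * (qP q q m / qP (-q) q m - 1) := by
  have hN := Aux13.qPneg_ne q hq m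
  have h := Aux13.main q hq m
  have hS : (∑' j : ℕ, (-1 : ℂ) ^ j * (qP (q ^ (j + 1)) q m - 1)) = Aux13.S q m := rfl
  rw [hS]
  field_simp
  linear_combination h
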